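/- For all real numbers t ≥ 0, η, ξ and all k, l ∈ ℤ with k ≠ l, one has |η·l − k·ξ| / (|k−l| + |η − ξ − (k−l)·t|) ≤ |l| + |ξ| + t·|l|/(1 + |(η−ξ)/(k−l) − t|). -/
import Mathlib


/-- Frequency inequality used in the reaction estimate `R_{G→φ}^{NR}`: for `t ≥ 0` and
`k ≠ l`, `|η l − k ξ|/(|k−l| + |η − ξ − (k−l)t|) ≤ |l| + |ξ| + t|l|/(1+|(η−ξ)/(k−l) − t|)`. -/
theorem reaction_symbol_le (t : ℝ) (ht : 0 ≤ t) (η ξ : ℝ) (k l : ℤ) (hkl : k ≠ l) :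
    |η * (l : ℝ) - (k : ℝ) * ξ| / (|(k : ℝ) - (l : ℝ)| + |η - ξ - ((k : ℝ) - (l : ℝ)) * t|) ≤
      |(l : ℝ)| + |ξ| + t * |(l : ℝ)| / (1 + |(η - ξ) / ((k : ℝ) - (l : ℝ)) - t|) := by
  set d : ℝ := (k : ℝ) - (l : ℝ) with hd
  have hdne : d ≠ 0 := sub_ne_zero.2 (by exact_mod_cast hkl)
  have hdpos : 0 < |d| := abs_pos.2 hdne
  set A : ℝ := |η - ξ - d * t| with hA
  have hAnn : 0 ≤ A := abs_nonneg _
  have hD : 0 < |d| + A := by linarith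
  -- rewrite the last term
  have hq : |(η - ξ) / d - t| = A / |d| := by
    rw [hA, ← abs_div]
    congr 1
    field_simp
  have hterm : t * |(l : ℝ)| / (1 + |(η - ξ) / d - t|) = t * |(l : ℝ)| * |d| / (|d| + A) := by
    rw [hq]
    have : 1 + A / |d| = (|d| + A) / |d| := by field_simp
    rw [this, div_div_eq_mul_div]
  rw [hterm]
  rw [div_le_iff₀ hD]
  have hdecomp : η * (l : ℝ) - (k : ℝ) * ξ = (l : ℝ) * (η - ξ - d * t) + d * (t * l - ξ) := by
    rw [hd]; ring
  have hkey : |η * (l : ℝ) - (k : ℝ) * ξ| ≤ |(l : ℝ)| * A + |d| * (t * |(l : ℝ)| + |ξ|) := by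
    rw [hdecomp]
    refine (abs_add_le _ _).trans ?_
    rw [abs_mul, abs_mul]
    gcongr
    refine (abs_sub _ _).trans ?_
    rw [abs_mul, abs_of_nonneg ht]
  have hl : 0 ≤ |(l : ℝ)| := abs_nonneg _
  have hx : 0 ≤ |ξ| := abs_nonneg _
  have hc : t * |(l : ℝ)| * |d| / (|d| + A) * (|d| + A) = t * |(l : ℝ)| * |d| :=
    div_mul_cancel₀ _ hD.ne'
  nlinarith [mul_nonneg hl hdpos.le, mul_nonneg hx hAnn, mul_nonneg hl hAnn, mul_nonneg hx hdpos.le]
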